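/- Let F be a real Banach space, E : F → F a continuous linear operator that is idempotent (E ∘ E = E), A : ℝ → F → F any map, γ ∈ ℝ, and T > 0. Suppose v : [0,T) → F is differentiable with v'(t) = E(A(t, v(t))) − γ(v(t) − E(v(t))) for all t ∈ [0,T), and the initial datum is an extension: E(v(0)) = v(0). Then v(t) = E(v(t)) for all t ∈ [0,T), and consequently v'(t) = E(A(t, v(t))) on [0,T); that is, v solves the constrained embedding system. -/

import Mathlib

/-- If `E` is idempotent and `v` solves the penalized equation
`v' = E(A(t,v)) - γ (v - E v)` on `[0,T)` with initial datum an extension,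
`E(v 0) = v 0`, then `v t = E (v t)` for all `t ∈ [0,T)` and consequently
`v' = E(A(t,v))` on `[0,T)`; that is, `v` solves the constrained system. -/
theorem penalized_solves_constrained
    {F : Type*} [NormedAddCommGroup F] [NormedSpace ℝ F] [CompleteSpace F]
    (E : F →L[ℝ] F) (hE : ∀ x : F, E (E x) = E x)
    (A : ℝ → F → F) (γ : ℝ) (T : ℝ) (hT : 0 < T)
    (v : ℝ → F)
    (hderiv : ∀ t ∈ Set.Ico (0 : ℝ) T,
      HasDerivWithinAt v (E (A t (v t)) - γ • (v t - E (v t)))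
        (Set.Ico (0 : ℝ) T) t)
    (hinit : E (v 0) = v 0) :
    (∀ t ∈ Set.Ico (0 : ℝ) T, v t = E (v t)) ∧
    (∀ t ∈ Set.Ico (0 : ℝ) T,
      HasDerivWithinAt v (E (A t (v t))) (Set.Ico (0 : ℝ) T) t) := by
  set s := Set.Ico (0 : ℝ) T with hs
  set w : ℝ → F := fun t => v t - E (v t) with hwdef
  -- derivative of w
  have hw : ∀ t ∈ s, HasDerivWithinAt w (-γ • w t) s t := by
    intro t ht
    have h1 := hderiv t ht
    have h2 : HasDerivWithinAt (fun t => E (v t))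
        (E (E (A t (v t)) - γ • (v t - E (v t)))) s t := E.hasFDerivAt.comp_hasDerivWithinAt t h1
    have hEd : E (E (A t (v t)) - γ • (v t - E (v t))) = E (A t (v t)) := by
      simp [map_sub, map_smul, hE]
    rw [hEd] at h2
    have := h1.sub h2
    convert this using 1
    · rfl
    · simp only [hwdef]; module
  -- u(t) = exp(γ t) • w t has zero derivative
  set u : ℝ → F := fun t => Real.exp (γ * t) • w t with hudef
  have hu : ∀ t ∈ s, HasDerivWithinAt u 0 s t := by
    intro t ht
    have hexp : HasDerivWithinAt (fun t => Real.exp (γ * t)) (γ * Real.exp (γ * t)) s t := by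
      have : HasDerivAt (fun t => Real.exp (γ * t)) (Real.exp (γ * t) * γ) t := by
        simpa using ((hasDerivAt_id t).const_mul γ).exp
      simpa [mul_comm] using this.hasDerivWithinAt
    have := hexp.smul (hw t ht)
    convert this using 1
    · rfl
    rw [smul_smul, ← add_smul, show Real.exp (γ * t) * -γ + γ * Real.exp (γ * t) = 0 by ring, zero_smul]
  have hconv : Convex ℝ s := convex_Ico 0 T
  have hdiff : DifferentiableOn ℝ u s := fun t ht => ((hu t ht).differentiableWithinAt)
  have hud : UniqueDiffOn ℝ s := uniqueDiffOn_Ico 0 T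
  have hconst : ∀ t ∈ s, u t = u 0 := by
    intro t ht
    have h0 : (0 : ℝ) ∈ s := ⟨le_refl 0, hT⟩
    exact hconv.is_const_of_fderivWithin_eq_zero hdiff
      (fun x hx => by
        have := (hu x hx).hasFDerivWithinAt.fderivWithin (hud x hx)
        rw [this]; ext; simp) ht h0
  have hu0 : u 0 = 0 := by
    simp [hudef, hwdef, hinit]
  have hw0 : ∀ t ∈ s, w t = 0 := by
    intro t ht
    have := hconst t ht
    rw [hu0] at this
    have hne : Real.exp (γ * t) ≠ 0 := (Real.exp_pos _).ne'
    have := this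
    simpa [hudef, hne, smul_eq_zero] using this
  have hvE : ∀ t ∈ s, v t = E (v t) := by
    intro t ht
    have := hw0 t ht
    simpa [hwdef, sub_eq_zero] using this
  refine ⟨hvE, fun t ht => ?_⟩
  have := hderiv t ht
  have hz : v t - E (v t) = 0 := by rw [← hvE t ht]; simp
  simpa [hz] using this
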